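/- Suppose the sequence g^t = (β^t, z^t, u^t), with z^t ∈ Z_r for all t, satisfies the PPA variational inequality with a symmetric positive definite matrix H. Then for every t ≥ 1, ‖g^t − g^{t+1}‖_H² ≤ ‖g^{t−1} − g^t‖_H²; that is, the H-norm of successive differences is monotonically non-increasing. -/

import Mathlib

open Matrix Filter

noncomputable section

/-- Vectors in ℝ^p. -/
abbrev Vec (p : ℕ) := Fin p → ℝ

/-- Triples `g = (β, z, u) ∈ ℝ^p × ℝ^p × ℝ^p`. -/
abbrev Trip (p : ℕ) := Vec p × Vec p × Vec p

/-- Index type for ℝ^{3p}. -/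
abbrev Idx3 (p : ℕ) := Fin p ⊕ Fin p ⊕ Fin p

/-- Identify a triple `(β, z, u)` with a vector in ℝ^{3p}. -/
def toSum {p : ℕ} (g : Trip p) : Idx3 p → ℝ := Sum.elim g.1 (Sum.elim g.2.1 g.2.2)

/-- The operator `F(β, z, u) = (−Aᵀu, u, Aβ − z − c)`. -/
def Fop {p : ℕ} (A : Matrix (Fin p) (Fin p) ℝ) (c : Vec p) (g : Trip p) : Trip p :=
  (-(Aᵀ *ᵥ g.2.2), g.2.2, A *ᵥ g.1 - g.2.1 - c)

/-- Membership in the box `Z_r = {z : ‖z‖_∞ ≤ r}`. -/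
def inZ {p : ℕ} (r : ℝ) (z : Vec p) : Prop := ∀ j, |z j| ≤ r

/-- The ℓ₁ norm on ℝ^p. -/
def l1 {p : ℕ} (β : Vec p) : ℝ := ∑ j, |β j|

/-- The Euclidean inner product on ℝ^{3p}. -/
def ip {p : ℕ} (v w : Trip p) : ℝ := toSum v ⬝ᵥ toSum w

/-- The bilinear form `⟨v, H w⟩` on ℝ^{3p}; in particular `ipH H v v = ‖v‖_H²`. -/
def ipH {p : ℕ} (H : Matrix (Idx3 p) (Idx3 p) ℝ) (v w : Trip p) : ℝ :=
  toSum v ⬝ᵥ (H *ᵥ toSum w)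

/-- `g* = (β*, z*, u*)` is a saddle point: `z* ∈ Z_r` and
`‖β‖₁ − ‖β*‖₁ + ⟨g − g*, F(g*)⟩ ≥ 0` for all `g = (β, z, u)` with `z ∈ Z_r`. -/
def IsSaddle {p : ℕ} (A : Matrix (Fin p) (Fin p) ℝ) (c : Vec p) (r : ℝ)
    (gs : Trip p) : Prop :=
  inZ r gs.2.1 ∧ ∀ g : Trip p, inZ r g.2.1 →
    0 ≤ l1 g.1 - l1 gs.1 + ip (g - gs) (Fop A c gs)

/-- The sequence `g^t` satisfies the PPA variational inequality with matrix `H`: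
for every `t` and every `g = (β, z, u)` with `z ∈ Z_r`,
`‖β‖₁ − ‖β^{t+1}‖₁ + ⟨g − g^{t+1}, F(g^{t+1})⟩ ≥ ⟨g − g^{t+1}, H(g^t − g^{t+1})⟩`. -/
def SatisfiesPVI {p : ℕ} (A : Matrix (Fin p) (Fin p) ℝ) (c : Vec p) (r : ℝ)
    (H : Matrix (Idx3 p) (Idx3 p) ℝ) (g : ℕ → Trip p) : Prop :=
  ∀ t : ℕ, ∀ gg : Trip p, inZ r gg.2.1 →
    ipH H (gg - g (t + 1)) (g t - g (t + 1)) ≤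
      l1 gg.1 - l1 (g (t + 1)).1 + ip (gg - g (t + 1)) (Fop A c (g (t + 1)))

section helpers
variable {p : ℕ}

lemma toSum_sub (a b : Trip p) : toSum (a - b) = toSum a - toSum b := by
  funext i; rcases i with i | i | i <;> rfl

lemma toSum_neg (a : Trip p) : toSum (-a) = -(toSum a) := by
  funext i; rcases i with i | i | i <;> rfl

lemma ip_expand (v w : Trip p) :
    ip v w = v.1 ⬝ᵥ w.1 + v.2.1 ⬝ᵥ w.2.1 + v.2.2 ⬝ᵥ w.2.2 := by
  simp [ip, toSum, dotProduct, Fintype.sum_sum_type, add_assoc]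

lemma ipH_symm (H : Matrix (Idx3 p) (Idx3 p) ℝ) (hH : H.IsHermitian) (v w : Trip p) :
    ipH H v w = ipH H w v := by
  have hT : Hᵀ = H := by
    have h := hH.eq
    rwa [Matrix.conjTranspose_eq_transpose_of_trivial] at h
  unfold ipH
  rw [Matrix.dotProduct_mulVec, ← Matrix.mulVec_transpose, hT, dotProduct_comm]

lemma ipH_sub_left (H : Matrix (Idx3 p) (Idx3 p) ℝ) (a b w : Trip p) :
    ipH H (a - b) w = ipH H a w - ipH H b w := by
  unfold ipH; rw [toSum_sub, sub_dotProduct]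

lemma ipH_sub_right (H : Matrix (Idx3 p) (Idx3 p) ℝ) (v a b : Trip p) :
    ipH H v (a - b) = ipH H v a - ipH H v b := by
  unfold ipH; rw [toSum_sub, Matrix.mulVec_sub, dotProduct_sub]

lemma ipH_neg_left (H : Matrix (Idx3 p) (Idx3 p) ℝ) (a w : Trip p) :
    ipH H (-a) w = - ipH H a w := by
  unfold ipH; rw [toSum_neg, neg_dotProduct]

lemma ip_sub_right (v a b : Trip p) : ip v (a - b) = ip v a - ip v b := by
  unfold ip; rw [toSum_sub, dotProduct_sub]

lemma ip_neg_left (a w : Trip p) : ip (-a) w = - ip a w := by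
  unfold ip; rw [toSum_neg, neg_dotProduct]

lemma ip_skew (A : Matrix (Fin p) (Fin p) ℝ) (c : Vec p) (a b : Trip p) :
    ip (a - b) (Fop A c a - Fop A c b) = 0 := by
  have h1 : (Fop A c a - Fop A c b)
      = (-(Aᵀ *ᵥ (a.2.2 - b.2.2)), a.2.2 - b.2.2, A *ᵥ (a.1 - b.1) - (a.2.1 - b.2.1)) := by
    simp [Fop, Prod.ext_iff, Matrix.mulVec_sub]
    constructor
    · abel
    · funext i; simp [Pi.sub_apply]; ring
  rw [ip_expand, h1]
  show (a.1 - b.1) ⬝ᵥ (-(Aᵀ *ᵥ (a.2.2 - b.2.2))) + (a.2.1 - b.2.1) ⬝ᵥ (a.2.2 - b.2.2)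
      + (a.2.2 - b.2.2) ⬝ᵥ (A *ᵥ (a.1 - b.1) - (a.2.1 - b.2.1)) = 0
  generalize a.1 - b.1 = w1
  generalize a.2.1 - b.2.1 = w2
  generalize a.2.2 - b.2.2 = w3
  have key : w1 ⬝ᵥ (Aᵀ *ᵥ w3) = w3 ⬝ᵥ (A *ᵥ w1) := by
    rw [Matrix.dotProduct_mulVec, Matrix.vecMul_transpose, dotProduct_comm]
  have e1 : w2 ⬝ᵥ w3 = w3 ⬝ᵥ w2 := dotProduct_comm _ _
  rw [dotProduct_neg, dotProduct_sub, key, e1]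
  ring

end helpers

/-- The H-norm of successive differences is monotonically non-increasing:
for every `t ≥ 1`, `‖g^t − g^{t+1}‖_H² ≤ ‖g^{t−1} − g^t‖_H²`. -/
theorem stmt13 {p : ℕ} (A : Matrix (Fin p) (Fin p) ℝ) (c : Vec p) (r : ℝ) (hr : 0 ≤ r)
    (H : Matrix (Idx3 p) (Idx3 p) ℝ) (hH : H.PosDef)
    (g : ℕ → Trip p) (hz : ∀ t, inZ r (g t).2.1)
    (hPVI : SatisfiesPVI A c r H g) :
    ∀ t : ℕ, 1 ≤ t →
      ipH H (g t - g (t + 1)) (g t - g (t + 1)) ≤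
        ipH H (g (t - 1) - g t) (g (t - 1) - g t) := by
  intro t ht
  obtain ⟨s, rfl⟩ : ∃ s, t = s + 1 := ⟨t - 1, (Nat.succ_pred_eq_of_pos ht).symm⟩
  simp only [Nat.add_sub_cancel]
  have h1 := hPVI s (g (s + 1 + 1)) (hz (s + 1 + 1))
  have h2 := hPVI (s + 1) (g (s + 1)) (hz (s + 1))
  have hneg : g (s+1+1) - g (s+1) = -(g (s+1) - g (s+1+1)) := by abel
  rw [hneg, ipH_neg_left, ip_neg_left] at h1
  have hskew : ip (g (s+1) - g (s+1+1)) (Fop A c (g (s+1)) - Fop A c (g (s+1+1))) = 0 :=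
    ip_skew A c _ _
  rw [ip_sub_right] at hskew
  have hsum : ipH H (g (s+1) - g (s+1+1)) (g (s+1) - g (s+1+1))
      ≤ ipH H (g (s+1) - g (s+1+1)) (g s - g (s+1)) := by linarith
  have hpsd := hH.posSemidef.dotProduct_mulVec_nonneg
    (toSum ((g (s+1) - g (s+1+1)) - (g s - g (s+1))))
  have hstar : star (toSum ((g (s+1) - g (s+1+1)) - (g s - g (s+1))))
      = toSum ((g (s+1) - g (s+1+1)) - (g s - g (s+1))) := by
    funext i; simp
  rw [hstar] at hpsd
  have hxy : ipH H ((g (s+1) - g (s+1+1)) - (g s - g (s+1))) ((g (s+1) - g (s+1+1)) - (g s - g (s+1)))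
      = ipH H (g (s+1) - g (s+1+1)) (g (s+1) - g (s+1+1))
        - ipH H (g (s+1) - g (s+1+1)) (g s - g (s+1))
        - ipH H (g s - g (s+1)) (g (s+1) - g (s+1+1))
        + ipH H (g s - g (s+1)) (g s - g (s+1)) := by
    have e1 := ipH_sub_left H (g (s+1) - g (s+1+1)) (g s - g (s+1)) ((g (s+1) - g (s+1+1)) - (g s - g (s+1)))
    have e2 := ipH_sub_right H (g (s+1) - g (s+1+1)) (g (s+1) - g (s+1+1)) (g s - g (s+1))
    have e3 := ipH_sub_right H (g s - g (s+1)) (g (s+1) - g (s+1+1)) (g s - g (s+1))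
    linarith
  have hsymm : ipH H (g (s+1) - g (s+1+1)) (g s - g (s+1))
      = ipH H (g s - g (s+1)) (g (s+1) - g (s+1+1)) := ipH_symm H hH.1 _ _
  have hpos : (0:ℝ) ≤ ipH H ((g (s+1) - g (s+1+1)) - (g s - g (s+1))) ((g (s+1) - g (s+1+1)) - (g s - g (s+1))) :=
    hpsd
  linarith
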